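/- Let t₀>0, set b = (2/3)·t₀^{3/2}, and define t(s) = (t₀^{3/2} − (3/2)s)^{2/3} for s∈[0,b). Then for all s∈[0,b): t(s)>0, t is twice differentiable at s with t''(s) + t'(s)²/(2·t(s)) = 0 and t(s)·t'(s)² = 1; moreover t(s) → 0 as s → b⁻. In particular, the unit-speed radial curve of the metric −t dt² arrives at the transition hypersurface {t=0} in the finite proper time b = (2/3)·t₀^{3/2}. -/

import Mathlib

/-- Section 3, item (1) of the paper: for the signature-changing metric
`−t dt² + g_{ij}dx^i dx^j`, the unit-speed radial curve
`t(s) = (t₀^{3/2} − (3/2)s)^{2/3}` satisfies the geodesic equation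
`t'' + t'²/(2t) = 0` and the unit-speed constraint `t·t'² = 1`, and arrives at
the transition hypersurface `{t = 0}` in the finite proper time
`b = (2/3)·t₀^{3/2}`. -/
theorem radial_curve_arrives_in_finite_time
    (t₀ b : ℝ) (ht₀ : 0 < t₀)
    (hb : b = 2 / 3 * t₀ ^ ((3 : ℝ) / 2))
    (t : ℝ → ℝ)
    (ht : ∀ s, t s = (t₀ ^ ((3 : ℝ) / 2) - 3 / 2 * s) ^ ((2 : ℝ) / 3)) :
    (∀ s ∈ Set.Ico 0 b,
        0 < t s ∧
        DifferentiableAt ℝ t s ∧ DifferentiableAt ℝ (deriv t) s ∧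
        deriv (deriv t) s + (deriv t s) ^ 2 / (2 * t s) = 0 ∧
        t s * (deriv t s) ^ 2 = 1) ∧
      Filter.Tendsto t (nhdsWithin b (Set.Iio b)) (nhds 0) := by
  set A : ℝ := t₀ ^ ((3 : ℝ) / 2) with hA
  set u : ℝ → ℝ := fun s => A - 3 / 2 * s with hu
  have hA0 : 0 < A := Real.rpow_pos_of_pos ht₀ _
  have hT : t = fun s => u s ^ ((2 : ℝ) / 3) := funext ht
  -- derivative of u
  have hud : ∀ s : ℝ, HasDerivAt u (-(3/2)) s := by
    intro s
    simpa using ((hasDerivAt_id s).const_mul (3/2 : ℝ)).const_sub A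
  have hupos : ∀ s ∈ Set.Ico 0 b, 0 < u s := by
    intro s hs
    have : 3 / 2 * s < 3 / 2 * b := by linarith [hs.2]
    have : 3 / 2 * s < A := by rw [hb] at this; linarith
    simpa [hu] using sub_pos.mpr this
  -- first derivative of t at points with u s > 0
  have hd1 : ∀ s : ℝ, 0 < u s → HasDerivAt t (-(u s ^ (-(1:ℝ)/3))) s := by
    intro s hus
    have h := (Real.hasDerivAt_rpow_const (x := u s) (p := (2:ℝ)/3)
      (Or.inl (ne_of_gt hus))).comp s (hud s)
    have heq : (2:ℝ)/3 * u s ^ ((2:ℝ)/3 - 1) * -(3/2) = -(u s ^ (-(1:ℝ)/3)) := by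
      norm_num
      ring_nf
    rw [hT]
    rw [heq] at h
    exact h
  -- deriv t equals the formula on the positive set
  have hderiv1 : ∀ s : ℝ, 0 < u s → deriv t s = -(u s ^ (-(1:ℝ)/3)) := fun s hs =>
    (hd1 s hs).deriv
  have hopen : IsOpen {s : ℝ | 0 < u s} := isOpen_lt continuous_const (by fun_prop)
  have hd2 : ∀ s : ℝ, 0 < u s → HasDerivAt (deriv t) (-(1/2) * u s ^ (-(4:ℝ)/3)) s := by
    intro s hus
    have h := ((Real.hasDerivAt_rpow_const (x := u s) (p := -(1:ℝ)/3)
      (Or.inl (ne_of_gt hus))).comp s (hud s)).neg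
    have h' : HasDerivAt (fun x => -(u x ^ (-(1:ℝ)/3))) (-(1/2) * u s ^ (-(4:ℝ)/3)) s := by
      refine HasDerivAt.congr_deriv (f := fun x => -(u x ^ (-(1:ℝ)/3))) h ?_
      rw [show (-(1:ℝ)/3 - 1) = -(4:ℝ)/3 by norm_num]
      ring
    apply h'.congr_of_eventuallyEq
    filter_upwards [hopen.mem_nhds hus] with x hx
    exact hderiv1 x hx
  refine ⟨fun s hs => ?_, ?_⟩
  · have hus := hupos s hs
    have h1 := hd1 s hus
    have h2 := hd2 s hus
    have e1 : deriv t s = -(u s ^ (-(1:ℝ)/3)) := h1.deriv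
    have e2 : deriv (deriv t) s = -(1/2) * u s ^ (-(4:ℝ)/3) := h2.deriv
    have hts : t s = u s ^ ((2:ℝ)/3) := ht s
    have htpos : 0 < t s := hts ▸ Real.rpow_pos_of_pos hus _
    have hsq : (deriv t s) ^ 2 = u s ^ (-(2:ℝ)/3) := by
      rw [e1, neg_pow, ← Real.rpow_natCast (u s ^ (-(1:ℝ)/3)) 2,
        ← Real.rpow_mul hus.le]
      norm_num
    refine ⟨htpos, h1.differentiableAt, h2.differentiableAt, ?_, ?_⟩
    · rw [e2, hsq, hts]
      have h43 : u s ^ (-(2:ℝ)/3) = u s ^ (-(4:ℝ)/3) * u s ^ ((2:ℝ)/3) := by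
        rw [← Real.rpow_add hus]; norm_num
      have hne : u s ^ ((2:ℝ)/3) ≠ 0 := ne_of_gt (Real.rpow_pos_of_pos hus _)
      rw [h43]
      field_simp
      ring
    · rw [hsq, hts, ← Real.rpow_add hus]
      norm_num
  · have hub : u b = 0 := by
      rw [hu, hb]; ring
    have hc : ContinuousAt (fun x : ℝ => x ^ ((2:ℝ)/3)) (u b) := by
      rw [hub]
      exact Real.continuousAt_rpow_const 0 _ (Or.inr (by norm_num))
    have : ContinuousAt t b := by
      rw [hT]
      exact hc.comp (by fun_prop)
    have htb : t b = 0 := by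
      rw [ht, show A - 3/2*b = 0 from hub, Real.zero_rpow (by norm_num)]
    exact tendsto_nhdsWithin_of_tendsto_nhds (htb ▸ this.tendsto)
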